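/- arXiv:1410.1152 — 8 statements merged into one kernel-verified Lean document; each statement's English description precedes it below -/
import Mathlib

section
/- Let λ ∈ ℝ, z ∈ ℂ with z ≠ λ, γ ∈ ℝ with γ ≠ 0, and let (a,b) ⊆ ℝ be an interval. Let Φλ : (a,b) → ℝ² be such that t ↦ Φλ(t)^⊤Φλ(t) is integrable on (a,x) for each x ∈ (a,b), set D(x) = ∫_a^x Φλ(t)^⊤Φλ(t) dt and c(x) = 1/γ + D(x), and assume c(x) ≠ 0 for all x ∈ (a,b); set Φ̃(x) = Φλ(x)/c(x). Let Θz, Φz : (a,b) → ℂ² satisfy W_x(Θz,Φz) = 1 for all x ∈ (a,b). Define Φ_γ(x) = Φz(x) + (1/(z-λ))·Φ̃(x)·W_x(Φλ,Φz) and Θ_γ(x) = Θz(x) + (1/(z-λ))·(Φ̃(x)·W_x(Φλ,Θz) + γ·Φ_γ(x)). Then: (i) W_x(Θ_γ,Φ_γ) = 1 for all x ∈ (a,b); (ii) Φλ(x) − Φ̃(x)·D(x) = γ^{-1}·Φ̃(x) for all x ∈ (a,b) (i.e. the commuted regular solution evaluated at z = λ equals γ^{-1}Φ̃). -/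
open MeasureTheory Set

noncomputable section

/-- The Wronskian `W(f,g) = f₁g₂ - f₂g₁` of two vectors in `ℂ²`. -/
def Wr (f g : ℂ × ℂ) : ℂ := f.1 * g.2 - f.2 * g.1

/-- Embedding of `ℝ²` into `ℂ²`. -/
def toC (v : ℝ × ℝ) : ℂ × ℂ := ((v.1 : ℂ), (v.2 : ℂ))

/-- Double commutation starting from the regular solution `Φ(λ,·)` at the left
endpoint: the transformed solutions `Θ_γ`, `Φ_γ` have Wronskian `1`, and the
commuted regular solution at `z = λ`, namely `Φ(λ,x) - Φ̃(x)·∫_a^x Φ(λ)^⊤Φ(λ)`,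
equals `γ⁻¹·Φ̃(x)`. -/
theorem double_commutation_regular
    (a b lam γ : ℝ) (hγ : γ ≠ 0) (z : ℂ) (hz : z ≠ (lam : ℂ))
    (Φlam : ℝ → ℝ × ℝ)
    (hint : ∀ x ∈ Ioo a b,
      IntegrableOn (fun t => (Φlam t).1 ^ 2 + (Φlam t).2 ^ 2) (Ioo a x))
    (D : ℝ → ℝ)
    (hD : ∀ x ∈ Ioo a b, D x = ∫ t in Ioo a x, ((Φlam t).1 ^ 2 + (Φlam t).2 ^ 2))
    (c : ℝ → ℝ) (hc : ∀ x ∈ Ioo a b, c x = 1 / γ + D x)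
    (hc0 : ∀ x ∈ Ioo a b, c x ≠ 0)
    (Φt : ℝ → ℂ × ℂ) (hΦt : ∀ x ∈ Ioo a b, Φt x = ((c x : ℂ))⁻¹ • toC (Φlam x))
    (Θz Φz : ℝ → ℂ × ℂ) (hW : ∀ x ∈ Ioo a b, Wr (Θz x) (Φz x) = 1)
    (Φγ Θγ : ℝ → ℂ × ℂ)
    (hΦγ : ∀ x ∈ Ioo a b,
      Φγ x = Φz x + ((z - (lam : ℂ))⁻¹ * Wr (toC (Φlam x)) (Φz x)) • Φt x)
    (hΘγ : ∀ x ∈ Ioo a b,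
      Θγ x = Θz x + (z - (lam : ℂ))⁻¹ •
        ((Wr (toC (Φlam x)) (Θz x)) • Φt x + (γ : ℂ) • Φγ x)) :
    (∀ x ∈ Ioo a b, Wr (Θγ x) (Φγ x) = 1) ∧
    (∀ x ∈ Ioo a b,
      toC (Φlam x) - ((D x : ℝ) : ℂ) • Φt x = ((γ⁻¹ : ℝ) : ℂ) • Φt x) := by
  have hzl : z - (lam : ℂ) ≠ 0 := sub_ne_zero.mpr hz
  constructor
  · intro x hx
    have hcx : ((c x : ℂ)) ≠ 0 := by exact_mod_cast hc0 x hx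
    have hWx := hW x hx
    rw [hΘγ x hx, hΦγ x hx, hΦt x hx]
    simp only [Wr, toC, Prod.fst_add, Prod.snd_add, Prod.smul_fst, Prod.smul_snd,
      smul_eq_mul] at hWx ⊢
    linear_combination hWx
  · intro x hx
    have hcx : ((c x : ℂ)) ≠ 0 := by exact_mod_cast hc0 x hx
    rw [hΦt x hx]
    have hcD : ((c x : ℂ)) - (D x : ℂ) = ((γ⁻¹ : ℝ) : ℂ) := by
      have := hc x hx
      push_cast [this]
      ring
    have : toC (Φlam x) = ((c x : ℂ)) • (((c x : ℂ))⁻¹ • toC (Φlam x)) := by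
      rw [smul_smul, mul_inv_cancel₀ hcx, one_smul]
    nth_rewrite 1 [this]
    rw [← sub_smul, hcD]
end
end

section
/- Let λ ∈ ℝ, z ∈ ℂ with z ≠ λ, γ ∈ ℝ with γ ≠ 0, and let (a,b) ⊆ ℝ be an interval. Let Φλ : (a,b) → ℝ², let c : (a,b) → ℝ with c(x) ≠ 0 for all x, and set Φ̃(x) = Φλ(x)/c(x). Let Θz, Φz : (a,b) → ℂ² and M ∈ ℂ, and set Ψz = Θz + M·Φz. Define Φ_γ(x) = Φz(x) + (1/(z-λ))·Φ̃(x)·W_x(Φλ,Φz), Θ_γ(x) = Θz(x) + (1/(z-λ))·(Φ̃(x)·W_x(Φλ,Θz) + γ·Φ_γ(x)), and Ψ_γ(x) = Ψz(x) + (1/(z-λ))·Φ̃(x)·W_x(Φλ,Ψz). Then for all x ∈ (a,b), Ψ_γ(x) = Θ_γ(x) + (M − γ/(z-λ))·Φ_γ(x). (In other words, the singular Weyl function of the doubly commuted operator is M_γ(z) = M(z) − γ/(z-λ).) -/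
open Set

noncomputable section

/-- The singular Weyl function of the doubly commuted operator constructed from
`u₋(λ,·) = Φ(λ,·)` is `M_γ(z) = M(z) - γ/(z-λ)`: the transformed Weyl solution
`Ψ_γ` decomposes as `Θ_γ + (M - γ/(z-λ))·Φ_γ`. -/
theorem double_commutation_weyl_function
    (a b lam γ : ℝ) (hγ : γ ≠ 0) (z : ℂ) (hz : z ≠ (lam : ℂ))
    (Φlam : ℝ → ℝ × ℝ)
    (c : ℝ → ℝ) (hc0 : ∀ x ∈ Ioo a b, c x ≠ 0)
    (Φt : ℝ → ℂ × ℂ) (hΦt : ∀ x ∈ Ioo a b, Φt x = ((c x : ℂ))⁻¹ • toC (Φlam x))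
    (Θz Φz Ψz : ℝ → ℂ × ℂ) (M : ℂ)
    (hΨ : ∀ x ∈ Ioo a b, Ψz x = Θz x + M • Φz x)
    (Φγ Θγ Ψγ : ℝ → ℂ × ℂ)
    (hΦγ : ∀ x ∈ Ioo a b,
      Φγ x = Φz x + ((z - (lam : ℂ))⁻¹ * Wr (toC (Φlam x)) (Φz x)) • Φt x)
    (hΘγ : ∀ x ∈ Ioo a b,
      Θγ x = Θz x + (z - (lam : ℂ))⁻¹ •
        ((Wr (toC (Φlam x)) (Θz x)) • Φt x + (γ : ℂ) • Φγ x))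
    (hΨγ : ∀ x ∈ Ioo a b,
      Ψγ x = Ψz x + ((z - (lam : ℂ))⁻¹ * Wr (toC (Φlam x)) (Ψz x)) • Φt x) :
    ∀ x ∈ Ioo a b,
      Ψγ x = Θγ x + (M - (γ : ℂ) / (z - (lam : ℂ))) • Φγ x := by
  intro x hx
  have hw : z - (lam : ℂ) ≠ 0 := sub_ne_zero.mpr hz
  rw [hΨγ x hx, hΘγ x hx, hΦγ x hx, hΨ x hx]
  obtain ⟨t1, t2⟩ := Θz x
  obtain ⟨f1, f2⟩ := Φz x
  obtain ⟨p1, p2⟩ := Φt x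
  obtain ⟨l1, l2⟩ := Φlam x
  simp only [Wr, toC, Prod.smul_mk, Prod.mk_add_mk, Prod.mk.injEq, smul_eq_mul, div_eq_mul_inv]
  constructor <;> field_simp <;> ring
end
end

section
/- Let λ ∈ ℝ, z ∈ ℂ with z ≠ λ, and let (a,b) ⊆ ℝ be an interval. Let Φλ : (a,b) → ℝ², let c : (a,b) → ℝ with c(x) ≠ 0 for all x, and set Φ̃(x) = Φλ(x)/c(x). Let Θz, Φz : (a,b) → ℂ² satisfy W_x(Θz,Φz) = 1 for all x ∈ (a,b), let M ∈ ℂ, and set Ψz = Θz + M·Φz. Define Φ_∞(x) = (1/(z-λ))·(Φz(x) + (1/(z-λ))·Φ̃(x)·W_x(Φλ,Φz)), Θ_∞(x) = (z-λ)·Θz(x) + Φ̃(x)·W_x(Φλ,Θz), and Ψ_∞(x) = (z-λ)·Ψz(x) + Φ̃(x)·W_x(Φλ,Ψz). Then for all x ∈ (a,b): (i) W_x(Θ_∞,Φ_∞) = 1; (ii) Ψ_∞(x) = Θ_∞(x) + (z-λ)²·M·Φ_∞(x). (In other words, in the limiting case γ = ∞ the singular Weyl function of the commuted operator is M_∞(z)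 = (z-λ)²·M(z).) -/
open Set

noncomputable section

/-- The limiting case `γ = ∞` of the double commutation method: with
`Φ_∞ = (z-λ)⁻¹(Φz + (z-λ)⁻¹ Φ̃ W(Φλ,Φz))`, `Θ_∞ = (z-λ)Θz + Φ̃ W(Φλ,Θz)` and
`Ψ_∞ = (z-λ)Ψz + Φ̃ W(Φλ,Ψz)` for `Ψz = Θz + M Φz`, one has
`W(Θ_∞,Φ_∞) = 1` and `Ψ_∞ = Θ_∞ + (z-λ)² M Φ_∞`, i.e. `M_∞(z) = (z-λ)² M(z)`. -/
theorem double_commutation_gamma_infinity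
    (a b lam : ℝ) (z : ℂ) (hz : z ≠ (lam : ℂ))
    (Φlam : ℝ → ℝ × ℝ)
    (c : ℝ → ℝ) (hc0 : ∀ x ∈ Ioo a b, c x ≠ 0)
    (Φt : ℝ → ℂ × ℂ) (hΦt : ∀ x ∈ Ioo a b, Φt x = ((c x : ℂ))⁻¹ • toC (Φlam x))
    (Θz Φz Ψz : ℝ → ℂ × ℂ)
    (hW : ∀ x ∈ Ioo a b, Wr (Θz x) (Φz x) = 1)
    (M : ℂ) (hΨ : ∀ x ∈ Ioo a b, Ψz x = Θz x + M • Φz x)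
    (Φinf Θinf Ψinf : ℝ → ℂ × ℂ)
    (hΦinf : ∀ x ∈ Ioo a b,
      Φinf x = (z - (lam : ℂ))⁻¹ •
        (Φz x + ((z - (lam : ℂ))⁻¹ * Wr (toC (Φlam x)) (Φz x)) • Φt x))
    (hΘinf : ∀ x ∈ Ioo a b,
      Θinf x = (z - (lam : ℂ)) • Θz x + (Wr (toC (Φlam x)) (Θz x)) • Φt x)
    (hΨinf : ∀ x ∈ Ioo a b,
      Ψinf x = (z - (lam : ℂ)) • Ψz x + (Wr (toC (Φlam x)) (Ψz x)) • Φt x) :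
    (∀ x ∈ Ioo a b, Wr (Θinf x) (Φinf x) = 1) ∧
    (∀ x ∈ Ioo a b, Ψinf x = Θinf x + ((z - (lam : ℂ)) ^ 2 * M) • Φinf x) := by

  have hd : z - (lam : ℂ) ≠ 0 := sub_ne_zero.mpr hz
  constructor
  · intro x hx
    have hc : (c x : ℂ) ≠ 0 := Complex.ofReal_ne_zero.mpr (hc0 x hx)
    have h1 := hW x hx
    rw [hΘinf x hx, hΦinf x hx, hΦt x hx]
    simp only [Wr, toC, Prod.fst_add, Prod.snd_add, Prod.smul_fst, Prod.smul_snd,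
      smul_eq_mul] at h1 ⊢
    field_simp
    ring_nf
    ring_nf at h1
    linear_combination ((c x : ℂ))^2 * (z - lam)^2 * h1
  · intro x hx
    have hc : (c x : ℂ) ≠ 0 := Complex.ofReal_ne_zero.mpr (hc0 x hx)
    rw [hΨinf x hx, hΘinf x hx, hΦinf x hx, hΦt x hx, hΨ x hx]
    have e1 : Wr (toC (Φlam x)) (Θz x + M • Φz x)
        = Wr (toC (Φlam x)) (Θz x) + M * Wr (toC (Φlam x)) (Φz x) := by
      simp only [Wr, toC, Prod.fst_add, Prod.snd_add, Prod.smul_fst, Prod.smul_snd,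
        smul_eq_mul]
      ring
    rw [e1]
    ext <;> simp only [Prod.fst_add, Prod.snd_add, Prod.smul_fst, Prod.smul_snd,
      smul_eq_mul, toC] <;> field_simp <;> ring
end
end

section
/- Let λ ∈ ℝ, z ∈ ℂ with z ≠ λ, β ∈ ℂ, and let (a,b) ⊆ ℝ be an interval. Let Θλ : (a,b) → ℝ², let c : (a,b) → ℝ with c(x) ≠ 0 for all x, and set Θ̃(x) = Θλ(x)/c(x). Let Θz, Φz : (a,b) → ℂ² satisfy W_x(Θz,Φz) = 1 for all x ∈ (a,b). Define Φ_γ(z,x) = (z-λ)·(Φz(x) + (1/(z-λ))·Θ̃(x)·W_x(Θλ,Φz)) and Θ_γ(z,x) = (1/(z-λ))·(Θz(x) + (1/(z-λ))·Θ̃(x)·W_x(Θλ,Θz) + β·Φ_γ(z,x)). Then W_x(Θ_γ(z,·),Φ_γ(z,·)) = 1 for all x ∈ (a,b). Moreover, if for a fixed x the map z ↦ Φ(z,x) ∈ ℂ² is continuous at λ and W_x(Θλ,Φ(λ,·)) = 1, then Φ_γ(z,x) → Θ̃(x) as z → λ (i.e. Φ_γ(λ,x) = Θ̃_γ(λ,x)).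 -/
open Set

noncomputable section

/-- Double commutation at the right endpoint starting from the singular solution
`Θ(λ,·)`: the fundamental system `Φ_γ(z,·)`, `Θ_γ(z,·)` of the commuted operator
has Wronskian `1`, and at a fixed point `x`, if `z ↦ Φ(z,x)` is continuous at `λ`
with `W_x(Θλ,Φ(λ,·)) = 1`, then `Φ_γ(z,x) → Θ̃(x)` as `z → λ`. -/
theorem double_commutation_right_endpoint
    (a b lam : ℝ) (z : ℂ) (hz : z ≠ (lam : ℂ)) (β : ℂ)
    (Θlam : ℝ → ℝ × ℝ)
    (c : ℝ → ℝ) (hc0 : ∀ x ∈ Ioo a b, c x ≠ 0)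
    (Θt : ℝ → ℂ × ℂ) (hΘt : ∀ x ∈ Ioo a b, Θt x = ((c x : ℂ))⁻¹ • toC (Θlam x))
    (Θz Φz : ℝ → ℂ × ℂ) (hW : ∀ x ∈ Ioo a b, Wr (Θz x) (Φz x) = 1)
    (Φγ Θγ : ℝ → ℂ × ℂ)
    (hΦγ : ∀ x ∈ Ioo a b,
      Φγ x = (z - (lam : ℂ)) •
        (Φz x + ((z - (lam : ℂ))⁻¹ * Wr (toC (Θlam x)) (Φz x)) • Θt x))
    (hΘγ : ∀ x ∈ Ioo a b,
      Θγ x = (z - (lam : ℂ))⁻¹ •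
        (Θz x + ((z - (lam : ℂ))⁻¹ * Wr (toC (Θlam x)) (Θz x)) • Θt x + β • Φγ x)) :
    (∀ x ∈ Ioo a b, Wr (Θγ x) (Φγ x) = 1) ∧
    (∀ x ∈ Ioo a b, ∀ Φfam : ℂ → ℂ × ℂ,
      ContinuousAt Φfam (lam : ℂ) →
      Wr (toC (Θlam x)) (Φfam (lam : ℂ)) = 1 →
      Filter.Tendsto
        (fun w : ℂ => (w - (lam : ℂ)) •
          (Φfam w + ((w - (lam : ℂ))⁻¹ * Wr (toC (Θlam x)) (Φfam w)) • Θt x))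
        (nhdsWithin (lam : ℂ) {(lam : ℂ)}ᶜ)
        (nhds (Θt x))) := by
  constructor
  · intro x hx
    have hd : (z - (lam : ℂ)) ≠ 0 := sub_ne_zero.mpr hz
    have hcx : ((c x : ℂ)) ≠ 0 := by exact_mod_cast hc0 x hx
    have h1 := hW x hx
    rw [hΘγ x hx, hΦγ x hx, hΘt x hx]
    simp only [Wr, toC, Prod.smul_fst, Prod.smul_snd, Prod.fst_add, Prod.snd_add,
      smul_eq_mul] at *
    field_simp
    ring_nf
    linear_combination (((c x : ℂ))^2 * (z - (lam:ℂ))^2) * h1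
  · intro x hx Φfam hcont hWlam
    have hgc : ContinuousAt
        (fun w : ℂ => (w - (lam : ℂ)) • Φfam w + (Wr (toC (Θlam x)) (Φfam w)) • Θt x)
        (lam : ℂ) := by
      simp only [Wr]
      fun_prop
    have hval : ((lam : ℂ) - lam) • Φfam (lam : ℂ)
        + (Wr (toC (Θlam x)) (Φfam (lam : ℂ))) • Θt x = Θt x := by
      rw [hWlam]; simp
    have h := hgc.tendsto
    rw [hval] at h
    refine Filter.Tendsto.congr' ?_ (h.mono_left nhdsWithin_le_nhds)
    filter_upwards [self_mem_nhdsWithin] with w hw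
    have hw' : w - (lam : ℂ) ≠ 0 := sub_ne_zero.mpr hw
    rw [smul_add, smul_smul, ← mul_assoc, mul_inv_cancel₀ hw', one_mul]
end
end

section
/- Let λ ∈ ℝ, z ∈ ℂ with z ≠ λ, d ∈ ℝ, ω ∈ ℂ, and let (a,b) ⊆ ℝ be an interval. Let Θλ : (a,b) → ℝ², let c : (a,b) → ℝ with c(x) ≠ 0 for all x, and set Θ̃(x) = Θλ(x)/c(x). Let Θz, Φz : (a,b) → ℂ², let M ∈ ℂ, and set Ψz = Θz + M·Φz. Define Φ_γ(x) = (z-λ)·Φz(x) + Θ̃(x)·W_x(Θλ,Φz), Θ_γ(x) = (1/(z-λ))·(Θz(x) + (1/(z-λ))·Θ̃(x)·W_x(Θλ,Θz) + (d − ω)·Φ_γ(x)), and Ψ_γ(x) = (1/(z-λ))·(Ψz(x) + (1/(z-λ))·Θ̃(x)·W_x(Θλ,Ψz)). Then for all x ∈ (a,b), Ψ_γ(x) = Θ_γ(x) + M_γ·Φ_γ(x), where M_γ = (M + ω·(z-λ))/(z-λ)² − d/(z-λ). -/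
open Set

noncomputable section

theorem key_alg (w : ℂ) (hw : w ≠ 0) (d ω M θ φ Wθ Wφ k : ℂ) :
    w⁻¹ * ((θ + M * φ) + (w⁻¹ * (Wθ + M * Wφ)) * k)
      = w⁻¹ * (θ + (w⁻¹ * Wθ) * k + (d - ω) * (w * φ + Wφ * k))
        + ((M + ω * w) / w ^ 2 - d / w) * (w * φ + Wφ * k) := by
  field_simp
  ring

/-- The singular Weyl function of the operator obtained by double commutation at
the right endpoint from `u₊(λ,·) = Θ(λ,·)` is
`M_γ(z) = (M(z) + ω(z-λ))/(z-λ)² - d/(z-λ)` (with `d = γ⁻¹`,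
`ω = W_b(Θ(λ),Θ̇(λ))`): the transformed Weyl solution `Ψ_γ` decomposes as
`Θ_γ + M_γ Φ_γ`. -/
theorem double_commutation_right_weyl_function
    (a b lam : ℝ) (z : ℂ) (hz : z ≠ (lam : ℂ)) (d : ℝ) (ω : ℂ)
    (Θlam : ℝ → ℝ × ℝ)
    (c : ℝ → ℝ) (hc0 : ∀ x ∈ Ioo a b, c x ≠ 0)
    (Θt : ℝ → ℂ × ℂ) (hΘt : ∀ x ∈ Ioo a b, Θt x = ((c x : ℂ))⁻¹ • toC (Θlam x))
    (Θz Φz Ψz : ℝ → ℂ × ℂ) (M : ℂ)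
    (hΨ : ∀ x ∈ Ioo a b, Ψz x = Θz x + M • Φz x)
    (Φγ Θγ Ψγ : ℝ → ℂ × ℂ)
    (hΦγ : ∀ x ∈ Ioo a b,
      Φγ x = (z - (lam : ℂ)) • Φz x + (Wr (toC (Θlam x)) (Φz x)) • Θt x)
    (hΘγ : ∀ x ∈ Ioo a b,
      Θγ x = (z - (lam : ℂ))⁻¹ •
        (Θz x + ((z - (lam : ℂ))⁻¹ * Wr (toC (Θlam x)) (Θz x)) • Θt x
          + ((d : ℂ) - ω) • Φγ x))
    (hΨγ : ∀ x ∈ Ioo a b,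
      Ψγ x = (z - (lam : ℂ))⁻¹ •
        (Ψz x + ((z - (lam : ℂ))⁻¹ * Wr (toC (Θlam x)) (Ψz x)) • Θt x)) :
    ∀ x ∈ Ioo a b,
      Ψγ x = Θγ x +
        ((M + ω * (z - (lam : ℂ))) / (z - (lam : ℂ)) ^ 2
          - (d : ℂ) / (z - (lam : ℂ))) • Φγ x := by
  intro x hx
  have hw : z - (lam : ℂ) ≠ 0 := sub_ne_zero.mpr hz
  have hcx : (c x : ℂ) ≠ 0 := by exact_mod_cast hc0 x hx
  rw [hΨγ x hx, hΘγ x hx, hΦγ x hx, hΨ x hx, hΘt x hx]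
  have W1 : Wr (toC (Θlam x)) (Θz x + M • Φz x)
      = Wr (toC (Θlam x)) (Θz x) + M * Wr (toC (Θlam x)) (Φz x) := by
    simp [Wr, toC]; ring
  rw [W1]
  have h1 := key_alg (z - lam) hw d ω M (Θz x).1 (Φz x).1
    (Wr (toC (Θlam x)) (Θz x)) (Wr (toC (Θlam x)) (Φz x)) ((c x : ℂ)⁻¹ * (Θlam x).1)
  have h2 := key_alg (z - lam) hw d ω M (Θz x).2 (Φz x).2
    (Wr (toC (Θlam x)) (Θz x)) (Wr (toC (Θlam x)) (Φz x)) ((c x : ℂ)⁻¹ * (Θlam x).2)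
  simp only [toC] at h1 h2 ⊢
  ext
  · simp only [Prod.smul_fst, Prod.fst_add, smul_eq_mul]
    linear_combination h1
  · simp only [Prod.smul_snd, Prod.snd_add, smul_eq_mul]
    linear_combination h2
end
end

section
/- Let (a,b) ⊆ ℝ and Q : (a,b) → Matrix(2,2,ℂ) with real entries and Q₁₂ = Q₂₁. Let λ ∈ ℝ, z ∈ ℂ with z ≠ λ, and let u₋ : (a,b) → ℝ² be a differentiable real solution of (1/i)σ₂u₋' + Qu₋ = λu₋, let c : (a,b) → ℝ be differentiable with c(x) ≠ 0 and c'(x) = u₋(x)^⊤u₋(x) for all x, and set u_γ = u₋/c and Q_γ(x) = ((u₋₁(x)² − u₋₂(x)²)/c(x))·σ₁ − (2u₋₁(x)u₋₂(x)/c(x))·σ₃. Let u : (a,b) → ℂ² be a differentiable solution of (1/i)σ₂u' + Qu = zu, and define v(x) = u(x) + (u_γ(x)/(z−λ))·W_x(u₋,u). Then v is differentiable on (a,b) and satisfies (1/i)σ₂v'(x) + (Q(x) + Q_γ(x))v(x) = zv(x) for all x ∈ (a,b). -/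
open Set

noncomputable section

/-- The Pauli matrix `σ₁` (as a complex matrix). -/
def sig1C : Matrix (Fin 2) (Fin 2) ℂ := !![0, 1; 1, 0]

/-- The Pauli matrix `σ₂` (as a complex matrix). -/
def sig2C : Matrix (Fin 2) (Fin 2) ℂ := !![0, -Complex.I; Complex.I, 0]

/-- The Pauli matrix `σ₃` (as a complex matrix). -/
def sig3C : Matrix (Fin 2) (Fin 2) ℂ := !![1, 0; 0, -1]

set_option maxHeartbeats 2000000 in
/-- The transformation formula of the double commutation method: if `u₋` is a
real solution of `τu = λu`, `c' = u₋^⊤u₋`, `c ≠ 0`, `u_γ = u₋/c`, and `u`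
solves `τu = zu`, then `v = u + (u_γ/(z-λ))·W(u₋,u)` solves the commuted
equation `τ_γv = zv` with `τ_γ = τ + Q_γ`. -/
theorem double_commutation_transformed_solution
    (a b lam : ℝ) (z : ℂ) (hz : z ≠ (lam : ℂ))
    (Q : ℝ → Matrix (Fin 2) (Fin 2) ℂ)
    (hQreal : ∀ x ∈ Ioo a b, ∀ i j, (Q x i j).im = 0)
    (hQsym : ∀ x ∈ Ioo a b, Q x 0 1 = Q x 1 0)
    (um um' : ℝ → Fin 2 → ℝ)
    (hum : ∀ x ∈ Ioo a b,
      HasDerivAt (fun t => (fun i => ((um t i : ℝ) : ℂ)))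
        (fun i => ((um' x i : ℝ) : ℂ)) x)
    (humeq : ∀ x ∈ Ioo a b,
      Complex.I⁻¹ • (sig2C.mulVec (fun i => ((um' x i : ℝ) : ℂ)))
        + (Q x).mulVec (fun i => ((um x i : ℝ) : ℂ))
        = (lam : ℂ) • (fun i => ((um x i : ℝ) : ℂ)))
    (c : ℝ → ℝ) (hc0 : ∀ x ∈ Ioo a b, c x ≠ 0)
    (hc' : ∀ x ∈ Ioo a b, HasDerivAt c (um x 0 ^ 2 + um x 1 ^ 2) x)
    (Qγ : ℝ → Matrix (Fin 2) (Fin 2) ℂ)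
    (hQγ : ∀ x ∈ Ioo a b,
      Qγ x = (((um x 0 ^ 2 - um x 1 ^ 2) / c x : ℝ) : ℂ) • sig1C
        - (((2 * um x 0 * um x 1) / c x : ℝ) : ℂ) • sig3C)
    (u u' : ℝ → Fin 2 → ℂ)
    (hu : ∀ x ∈ Ioo a b, HasDerivAt u (u' x) x)
    (hueq : ∀ x ∈ Ioo a b,
      Complex.I⁻¹ • (sig2C.mulVec (u' x)) + (Q x).mulVec (u x) = z • u x)
    (v : ℝ → Fin 2 → ℂ)
    (hv : ∀ x, v x = u x
      + ((((um x 0 : ℝ) : ℂ) * u x 1 - ((um x 1 : ℝ) : ℂ) * u x 0) / (z - (lam : ℂ))) •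
        (fun i => ((um x i / c x : ℝ) : ℂ))) :
    ∀ x ∈ Ioo a b, ∃ vd : Fin 2 → ℂ, HasDerivAt v vd x ∧
      Complex.I⁻¹ • (sig2C.mulVec vd) + (Q x + Qγ x).mulVec (v x) = z • v x := by
  intro x hx
  have hC : ((c x : ℝ) : ℂ) ≠ 0 := Complex.ofReal_ne_zero.mpr (hc0 x hx)
  have hk : z - (lam : ℂ) ≠ 0 := sub_ne_zero.mpr hz
  have hQ01 : Q x 0 1 = Q x 1 0 := hQsym x hx
  -- scalar equations from the Dirac equations
  have t0 := congrFun (humeq x hx) 0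
  have t1 := congrFun (humeq x hx) 1
  have s0 := congrFun (hueq x hx) 0
  have s1 := congrFun (hueq x hx) 1
  simp [sig2C, Matrix.mulVec, dotProduct, Fin.sum_univ_two, Complex.inv_I] at t0 t1 s0 s1
  have e1 : ((um' x 1 : ℝ) : ℂ)
      = Q x 0 0 * ((um x 0 : ℝ) : ℂ) + Q x 0 1 * ((um x 1 : ℝ) : ℂ) - (lam : ℂ) * ((um x 0 : ℝ) : ℂ) := by
    linear_combination (-1 : ℂ) * t0 + ((um' x 1 : ℝ) : ℂ) * Complex.I_mul_I
  have e0 : ((um' x 0 : ℝ) : ℂ)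
      = (lam : ℂ) * ((um x 1 : ℝ) : ℂ) - Q x 1 0 * ((um x 0 : ℝ) : ℂ) - Q x 1 1 * ((um x 1 : ℝ) : ℂ) := by
    linear_combination t1 + ((um' x 0 : ℝ) : ℂ) * Complex.I_mul_I
  have f1 : u' x 1 = Q x 0 0 * u x 0 + Q x 0 1 * u x 1 - z * u x 0 := by
    linear_combination (-1 : ℂ) * s0 + u' x 1 * Complex.I_mul_I
  have f0 : u' x 0 = z * u x 1 - Q x 1 0 * u x 0 - Q x 1 1 * u x 1 := by
    linear_combination s1 + u' x 0 * Complex.I_mul_I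
  -- derivative building blocks
  have hm0 : HasDerivAt (fun t => ((um t 0 : ℝ) : ℂ)) ((um' x 0 : ℝ) : ℂ) x :=
    hasDerivAt_pi.mp (hum x hx) 0
  have hm1 : HasDerivAt (fun t => ((um t 1 : ℝ) : ℂ)) ((um' x 1 : ℝ) : ℂ) x :=
    hasDerivAt_pi.mp (hum x hx) 1
  have hu0 : HasDerivAt (fun t => u t 0) (u' x 0) x := hasDerivAt_pi.mp (hu x hx) 0
  have hu1 : HasDerivAt (fun t => u t 1) (u' x 1) x := hasDerivAt_pi.mp (hu x hx) 1
  have hcC : HasDerivAt (fun t => ((c t : ℝ) : ℂ)) (((um x 0 ^ 2 + um x 1 ^ 2 : ℝ)) : ℂ) x :=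
    (hc' x hx).ofReal_comp
  have hW : HasDerivAt (fun t => ((um t 0 : ℝ) : ℂ) * u t 1 - ((um t 1 : ℝ) : ℂ) * u t 0)
      (((um' x 0 : ℝ) : ℂ) * u x 1 + ((um x 0 : ℝ) : ℂ) * u' x 1
        - (((um' x 1 : ℝ) : ℂ) * u x 0 + ((um x 1 : ℝ) : ℂ) * u' x 0)) x :=
    (hm0.mul hu1).sub (hm1.mul hu0)
  have hveq : v = fun t => fun i : Fin 2 => u t i
      + (((um t 0 : ℝ) : ℂ) * u t 1 - ((um t 1 : ℝ) : ℂ) * u t 0) / (z - (lam : ℂ))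
        * (((um t i : ℝ) : ℂ) / ((c t : ℝ) : ℂ)) := by
    funext t i
    rw [hv t]
    simp only [Pi.add_apply, Pi.smul_apply, smul_eq_mul, Complex.ofReal_div]
  refine ⟨fun i => u' x i
      + ((((um' x 0 : ℝ) : ℂ) * u x 1 + ((um x 0 : ℝ) : ℂ) * u' x 1
          - (((um' x 1 : ℝ) : ℂ) * u x 0 + ((um x 1 : ℝ) : ℂ) * u' x 0)) / (z - (lam : ℂ))
          * (((um x i : ℝ) : ℂ) / ((c x : ℝ) : ℂ))
        + (((um x 0 : ℝ) : ℂ) * u x 1 - ((um x 1 : ℝ) : ℂ) * u x 0) / (z - (lam : ℂ))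
          * ((((um' x i : ℝ) : ℂ) * ((c x : ℝ) : ℂ)
              - ((um x i : ℝ) : ℂ) * (((um x 0 ^ 2 + um x 1 ^ 2 : ℝ)) : ℂ)) / ((c x : ℝ) : ℂ) ^ 2)),
    ?_, ?_⟩
  · rw [hveq]
    refine hasDerivAt_pi.mpr fun i => ?_
    exact (hasDerivAt_pi.mp (hu x hx) i).add
      ((hW.div_const _).mul ((hasDerivAt_pi.mp (hum x hx) i).div hcC hC))
  have hII : ∀ w : ℂ, Complex.I * (Complex.I * w) = -w := fun w => by
      rw [← mul_assoc, Complex.I_mul_I]; ring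
  · funext i
    fin_cases i <;>
    · simp [hveq, hQγ x hx, sig1C, sig2C, sig3C, Matrix.mulVec, dotProduct,
        Fin.sum_univ_two, Matrix.add_apply, Matrix.sub_apply, Matrix.smul_apply,
        Pi.add_apply, Pi.smul_apply, smul_eq_mul, Complex.inv_I,
        Complex.ofReal_div, Complex.ofReal_add, Complex.ofReal_sub, Complex.ofReal_pow,
        Complex.ofReal_mul, Complex.ofReal_ofNat, Matrix.cons_val', Matrix.cons_val_zero,
        Matrix.cons_val_one, Matrix.head_cons, Matrix.head_fin_const, Matrix.empty_val',
        Matrix.cons_val_fin_one, Fin.isValue]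
      simp only [hII]
      rw [e0, e1, f0, f1, hQ01]
      field_simp [hC, hk]
      ring
end
end

section
/- Let (a,b) ⊆ ℝ and Q : (a,b) → Matrix(2,2,ℂ) with real entries and Q₁₂ = Q₂₁. Let λ ∈ ℝ and let u₋ : (a,b) → ℝ² be a differentiable real solution of (1/i)σ₂u₋' + Qu₋ = λu₋, let c : (a,b) → ℝ be differentiable with c(x) ≠ 0 and c'(x) = u₋(x)^⊤u₋(x) for all x, and set u_γ = u₋/c and Q_γ(x) = ((u₋₁(x)² − u₋₂(x)²)/c(x))·σ₁ − (2u₋₁(x)u₋₂(x)/c(x))·σ₃. Then u_γ is differentiable on (a,b) and satisfies (1/i)σ₂u_γ'(x) + (Q(x) + Q_γ(x))u_γ(x) = λu_γ(x) for all x ∈ (a,b). -/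
open Set

noncomputable section

/-- The generating function of the boundary conditions of the doubly commuted
operator: if `u₋` is a real solution of `τu = λu`, `c' = u₋^⊤u₋` and `c ≠ 0`,
then `u_γ = u₋/c` solves the commuted equation `τ_γu = λu` with
`τ_γ = τ + Q_γ`. -/
theorem double_commutation_ugamma_solution
    (a b lam : ℝ)
    (Q : ℝ → Matrix (Fin 2) (Fin 2) ℂ)
    (hQreal : ∀ x ∈ Ioo a b, ∀ i j, (Q x i j).im = 0)
    (hQsym : ∀ x ∈ Ioo a b, Q x 0 1 = Q x 1 0)
    (um um' : ℝ → Fin 2 → ℝ)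
    (hum : ∀ x ∈ Ioo a b,
      HasDerivAt (fun t => (fun i => ((um t i : ℝ) : ℂ)))
        (fun i => ((um' x i : ℝ) : ℂ)) x)
    (humeq : ∀ x ∈ Ioo a b,
      Complex.I⁻¹ • (sig2C.mulVec (fun i => ((um' x i : ℝ) : ℂ)))
        + (Q x).mulVec (fun i => ((um x i : ℝ) : ℂ))
        = (lam : ℂ) • (fun i => ((um x i : ℝ) : ℂ)))
    (c : ℝ → ℝ) (hc0 : ∀ x ∈ Ioo a b, c x ≠ 0)
    (hc' : ∀ x ∈ Ioo a b, HasDerivAt c (um x 0 ^ 2 + um x 1 ^ 2) x)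
    (Qγ : ℝ → Matrix (Fin 2) (Fin 2) ℂ)
    (hQγ : ∀ x ∈ Ioo a b,
      Qγ x = (((um x 0 ^ 2 - um x 1 ^ 2) / c x : ℝ) : ℂ) • sig1C
        - (((2 * um x 0 * um x 1) / c x : ℝ) : ℂ) • sig3C)
    (uγ : ℝ → Fin 2 → ℂ)
    (huγ : ∀ x, uγ x = fun i => ((um x i / c x : ℝ) : ℂ)) :
    ∀ x ∈ Ioo a b, ∃ ud : Fin 2 → ℂ, HasDerivAt uγ ud x ∧
      Complex.I⁻¹ • (sig2C.mulVec ud) + (Q x + Qγ x).mulVec (uγ x)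
        = (lam : ℂ) • uγ x := by
  intro x hx
  have hcx := hc0 x hx
  have hcd := hc' x hx
  -- componentwise complex derivatives
  have humC : ∀ i, HasDerivAt (fun t => ((um t i : ℝ) : ℂ)) ((um' x i : ℂ)) x := by
    intro i
    exact hasDerivAt_pi.mp (hum x hx) i
  -- real derivatives
  have humR : ∀ i, HasDerivAt (fun t => um t i) (um' x i) x := by
    intro i
    have h := Complex.reCLM.hasFDerivAt.comp_hasDerivAt x (humC i)
    simpa [Function.comp_def] using h
  -- derivative of quotient
  have hquot : ∀ i, HasDerivAt (fun t => um t i / c t)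
      ((um' x i * c x - um x i * (um x 0 ^ 2 + um x 1 ^ 2)) / c x ^ 2) x := by
    intro i
    exact (humR i).div hcd hcx
  set ud : Fin 2 → ℂ := fun i =>
    (((um' x i * c x - um x i * (um x 0 ^ 2 + um x 1 ^ 2)) / c x ^ 2 : ℝ) : ℂ) with hud
  refine ⟨ud, ?_, ?_⟩
  · have huγ' : uγ = fun t => fun i => ((um t i / c t : ℝ) : ℂ) := funext huγ
    rw [huγ']
    refine hasDerivAt_pi.mpr fun i => ?_
    have h := Complex.ofRealCLM.hasFDerivAt.comp_hasDerivAt x (hquot i)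
    simpa [hud, Function.comp_def, Complex.ofReal_div] using h
  · have e0 := congrFun (humeq x hx) 0
    have e1 := congrFun (humeq x hx) 1
    simp [sig2C, Matrix.mulVec, dotProduct, Fin.sum_univ_two,
      Complex.inv_I, Pi.smul_apply, smul_eq_mul] at e0 e1
    funext i
    have hC : (c x : ℂ) ≠ 0 := by exact_mod_cast hcx
    have hI : Complex.I * Complex.I = -1 := Complex.I_mul_I
    fin_cases i <;>
      simp [sig1C, sig2C, sig3C, hQγ x hx, huγ, hud, Matrix.mulVec,
        dotProduct, Fin.sum_univ_two, Matrix.add_apply, Matrix.smul_apply,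
        Matrix.sub_apply, Pi.smul_apply, smul_eq_mul, Complex.inv_I] <;>
      field_simp
    · linear_combination ((c x : ℂ)) * e0
        - (um x 1 : ℂ) * ((um x 0 : ℂ)^2 + (um x 1 : ℂ)^2) * hI
    · linear_combination ((c x : ℂ)) * e1
        + (um x 0 : ℂ) * ((um x 0 : ℂ)^2 + (um x 1 : ℂ)^2) * hI
end
end

section
/- Let b > 0, let Q : (0,b) → Matrix(2,2,ℂ) have real entries with Q₁₂ = Q₂₁, let z ∈ ℂ with Im z ≠ 0, and let Θ, Φ : (0,b) → ℂ² be differentiable solutions of (1/i)σ₂u' + Qu = zu. Let M ∈ ℂ and set Ψ = Θ + M·Φ. Assume: (i) the function x ↦ |Ψ₁(x)|² + |Ψ₂(x)|² is Lebesgue integrable on (0,b); (ii) as x → 0⁺, W_x(Θ̄,Θ) → 0, W_x(Φ̄,Φ) → 0, W_x(Θ̄,Φ) → 1 and W_x(Φ̄,Θ) → −1, where bars denote componentwise complex conjugates; (iii) W_x(Ψ̄,Ψ) → 0 as x → b⁻. Then Im M = Im z · ∫_0^b (|Ψ₁(x)|² + |Ψ₂(x)|²) dx. In particular, Im z > 0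 implies Im M ≥ 0. -/
open MeasureTheory Set

noncomputable section

/-- The Wronskian `W_x(f,g) = f₁(x)g₂(x) - f₂(x)g₁(x)`. -/
def Wx (f g : ℝ → Fin 2 → ℂ) (x : ℝ) : ℂ := f x 0 * g x 1 - f x 1 * g x 0

lemma ode_comp (Q : Matrix (Fin 2) (Fin 2) ℂ) (u u' : Fin 2 → ℂ) (z : ℂ)
    (h : Complex.I⁻¹ • (sig2C.mulVec u') + Q.mulVec u = z • u) :
    u' 0 = z * u 1 - Q 1 0 * u 0 - Q 1 1 * u 1 ∧
    u' 1 = Q 0 0 * u 0 + Q 0 1 * u 1 - z * u 0 := by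
  have h0 := congrFun h 0
  have h1 := congrFun h 1
  simp [sig2C, Matrix.mulVec, dotProduct, Fin.sum_univ_two, Complex.inv_I] at h0 h1
  constructor
  · linear_combination h1 + u' 0 * Complex.I_sq
  · linear_combination -h0 + u' 1 * Complex.I_sq

lemma key_alg_s17 (Q : Matrix (Fin 2) (Fin 2) ℂ) (hr : ∀ i j, (Q i j).im = 0)
    (hs : Q 0 1 = Q 1 0) (z : ℂ) (u u' : Fin 2 → ℂ)
    (h0 : u' 0 = z * u 1 - Q 1 0 * u 0 - Q 1 1 * u 1)
    (h1 : u' 1 = Q 0 0 * u 0 + Q 0 1 * u 1 - z * u 0) :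
    (starRingEnd ℂ) (u' 0) * u 1 + (starRingEnd ℂ) (u 0) * u' 1 -
      ((starRingEnd ℂ) (u' 1) * u 0 + (starRingEnd ℂ) (u 1) * u' 0)
    = ((starRingEnd ℂ) z - z) *
        (((Complex.normSq (u 0) + Complex.normSq (u 1) : ℝ) : ℂ)) := by
  have c00 : (starRingEnd ℂ) (Q 0 0) = Q 0 0 := Complex.conj_eq_iff_im.mpr (hr 0 0)
  have c01 : (starRingEnd ℂ) (Q 0 1) = Q 0 1 := Complex.conj_eq_iff_im.mpr (hr 0 1)
  have c10 : (starRingEnd ℂ) (Q 1 0) = Q 1 0 := Complex.conj_eq_iff_im.mpr (hr 1 0)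
  have c11 : (starRingEnd ℂ) (Q 1 1) = Q 1 1 := Complex.conj_eq_iff_im.mpr (hr 1 1)
  rw [h0, h1]
  push_cast
  rw [Complex.normSq_eq_conj_mul_self, Complex.normSq_eq_conj_mul_self]
  simp only [map_sub, map_add, map_mul, c00, c01, c10, c11, hs]
  ring

/-- The Herglotz property of the Weyl function in the limit circle case:
`Im M = Im z · ∫_0^b |Ψ(z,x)|² dx` for the Weyl solution `Ψ = Θ + M·Φ`,
given the boundary Wronskian limits at `0` and `b`. In particular `Im z > 0`
implies `Im M ≥ 0`. -/
theorem herglotz_property_weyl_function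
    (b : ℝ) (hb : 0 < b)
    (Q : ℝ → Matrix (Fin 2) (Fin 2) ℂ)
    (hQreal : ∀ x ∈ Ioo 0 b, ∀ i j, (Q x i j).im = 0)
    (hQsym : ∀ x ∈ Ioo 0 b, Q x 0 1 = Q x 1 0)
    (z : ℂ) (hz : z.im ≠ 0)
    (Θ Φ Θ' Φ' : ℝ → Fin 2 → ℂ)
    (hΘd : ∀ x ∈ Ioo 0 b, HasDerivAt Θ (Θ' x) x)
    (hΦd : ∀ x ∈ Ioo 0 b, HasDerivAt Φ (Φ' x) x)
    (hΘeq : ∀ x ∈ Ioo 0 b,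
      Complex.I⁻¹ • (sig2C.mulVec (Θ' x)) + (Q x).mulVec (Θ x) = z • Θ x)
    (hΦeq : ∀ x ∈ Ioo 0 b,
      Complex.I⁻¹ • (sig2C.mulVec (Φ' x)) + (Q x).mulVec (Φ x) = z • Φ x)
    (M : ℂ) (Ψ : ℝ → Fin 2 → ℂ)
    (hΨ : ∀ x ∈ Ioo 0 b, Ψ x = Θ x + M • Φ x)
    (hΨint : IntegrableOn (fun x => Complex.normSq (Ψ x 0) + Complex.normSq (Ψ x 1))
      (Ioo 0 b))
    (hΘΘ : Filter.Tendsto (fun x => Wx (fun t i => (starRingEnd ℂ) (Θ t i)) Θ x)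
      (nhdsWithin 0 (Ioi 0)) (nhds 0))
    (hΦΦ : Filter.Tendsto (fun x => Wx (fun t i => (starRingEnd ℂ) (Φ t i)) Φ x)
      (nhdsWithin 0 (Ioi 0)) (nhds 0))
    (hΘΦ : Filter.Tendsto (fun x => Wx (fun t i => (starRingEnd ℂ) (Θ t i)) Φ x)
      (nhdsWithin 0 (Ioi 0)) (nhds 1))
    (hΦΘ : Filter.Tendsto (fun x => Wx (fun t i => (starRingEnd ℂ) (Φ t i)) Θ x)
      (nhdsWithin 0 (Ioi 0)) (nhds (-1)))
    (hΨb : Filter.Tendsto (fun x => Wx (fun t i => (starRingEnd ℂ) (Ψ t i)) Ψ x)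
      (nhdsWithin b (Iio b)) (nhds 0)) :
    M.im = z.im * ∫ x in Ioo 0 b, (Complex.normSq (Ψ x 0) + Complex.normSq (Ψ x 1)) ∧
    (0 < z.im → 0 ≤ M.im) := by
  set r : ℝ → ℝ := fun x => Complex.normSq (Ψ x 0) + Complex.normSq (Ψ x 1) with hrdef
  set F : ℝ → ℂ := fun x => Wx (fun t i => (starRingEnd ℂ) (Ψ t i)) Ψ x with hFdef
  set g : ℝ → ℂ := fun x => ((starRingEnd ℂ) z - z) * ((r x : ℝ) : ℂ) with hgdef
  set D : ℝ → Fin 2 → ℂ := fun x => Θ' x + M • Φ' x with hDdef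
  -- derivative of Ψ
  have hΨd : ∀ x ∈ Ioo 0 b, HasDerivAt Ψ (D x) x := by
    intro x hx
    have h1 : HasDerivAt (fun t => Θ t + M • Φ t) (Θ' x + M • Φ' x) x :=
      (hΘd x hx).add ((hΦd x hx).const_smul M)
    refine h1.congr_of_eventuallyEq ?_
    filter_upwards [isOpen_Ioo.mem_nhds hx] with t ht using hΨ t ht
  -- scalar ODE for Ψ
  have hode : ∀ x ∈ Ioo 0 b,
      D x 0 = z * Ψ x 1 - Q x 1 0 * Ψ x 0 - Q x 1 1 * Ψ x 1 ∧
      D x 1 = Q x 0 0 * Ψ x 0 + Q x 0 1 * Ψ x 1 - z * Ψ x 0 := by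
    intro x hx
    obtain ⟨t0, t1⟩ := ode_comp (Q x) (Θ x) (Θ' x) z (hΘeq x hx)
    obtain ⟨f0, f1⟩ := ode_comp (Q x) (Φ x) (Φ' x) z (hΦeq x hx)
    have hp := hΨ x hx
    have hp0 : Ψ x 0 = Θ x 0 + M * Φ x 0 := by rw [hp]; simp
    have hp1 : Ψ x 1 = Θ x 1 + M * Φ x 1 := by rw [hp]; simp
    have hd0 : D x 0 = Θ' x 0 + M * Φ' x 0 := by simp [hDdef]
    have hd1 : D x 1 = Θ' x 1 + M * Φ' x 1 := by simp [hDdef]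
    constructor
    · rw [hd0, hp0, hp1, t0, f0]; ring
    · rw [hd1, hp0, hp1, t1, f1]; ring
  -- derivative of F
  have hFd : ∀ x ∈ Ioo 0 b, HasDerivAt F (g x) x := by
    intro x hx
    have hD := hΨd x hx
    have d0 : HasDerivAt (fun t => Ψ t 0) (D x 0) x := hasDerivAt_pi.mp hD 0
    have d1 : HasDerivAt (fun t => Ψ t 1) (D x 1) x := hasDerivAt_pi.mp hD 1
    have c0 : HasDerivAt (fun t => (starRingEnd ℂ) (Ψ t 0)) ((starRingEnd ℂ) (D x 0)) x := d0.star
    have c1 : HasDerivAt (fun t => (starRingEnd ℂ) (Ψ t 1)) ((starRingEnd ℂ) (D x 1)) x := d1.star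
    have := (c0.mul d1).sub (c1.mul d0)
    obtain ⟨e0, e1⟩ := hode x hx
    have halg := key_alg_s17 (Q x) (hQreal x hx) (hQsym x hx) z (Ψ x) (D x) e0 e1
    have : HasDerivAt F
        ((starRingEnd ℂ) (D x 0) * Ψ x 1 + (starRingEnd ℂ) (Ψ x 0) * D x 1 -
          ((starRingEnd ℂ) (D x 1) * Ψ x 0 + (starRingEnd ℂ) (Ψ x 1) * D x 0)) x := this
    rw [halg] at this
    exact this
  -- continuity of g on Ioo
  have hgc : ∀ x ∈ Ioo 0 b, ContinuousAt g x := by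
    intro x hx
    have hc : ContinuousAt Ψ x := (hΨd x hx).continuousAt
    have h0 : ContinuousAt (fun t => Ψ t 0) x := (continuous_apply 0).continuousAt.comp hc
    have h1 : ContinuousAt (fun t => Ψ t 1) x := (continuous_apply 1).continuousAt.comp hc
    have : ContinuousAt r x :=
      ((Complex.continuous_normSq.continuousAt.comp h0).add
        (Complex.continuous_normSq.continuousAt.comp h1))
    exact continuousAt_const.mul (Complex.continuous_ofReal.continuousAt.comp this)
  -- FTC on compact subintervals
  have key : ∀ a c : ℝ, 0 < a → a ≤ c → c < b → ∫ t in a..c, g t = F c - F a := by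
    intro a c ha hac hcb
    have hsub : uIcc a c ⊆ Ioo 0 b := by
      rw [uIcc_of_le hac]
      exact fun t ht => ⟨lt_of_lt_of_le ha ht.1, lt_of_le_of_lt ht.2 hcb⟩
    refine intervalIntegral.integral_eq_sub_of_hasDerivAt
      (fun t ht => hFd t (hsub ht)) ?_
    exact ContinuousOn.intervalIntegrable
      (fun t ht => (hgc t (hsub ht)).continuousWithinAt)
  -- sequences approaching the endpoints
  set u : ℕ → ℝ := fun n => b / 2 * (1 / (n + 1)) with hudef
  set v : ℕ → ℝ := fun n => b - u n with hvdef
  have hu_pos : ∀ n, 0 < u n := by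
    intro n; apply mul_pos (by linarith); positivity
  have hu_le : ∀ n, u n ≤ b / 2 := by
    intro n
    have h1 : (1 : ℝ) / (n + 1) ≤ 1 := by
      rw [div_le_one (by positivity)]; linarith [Nat.cast_nonneg (α := ℝ) n]
    calc u n ≤ b / 2 * 1 := by
          apply mul_le_mul_of_nonneg_left h1 (by linarith)
      _ = b / 2 := mul_one _
  have hu_anti : Antitone u := by
    intro m n hmn
    apply mul_le_mul_of_nonneg_left _ (by linarith : (0:ℝ) ≤ b / 2)
    apply one_div_le_one_div_of_le (by positivity)
    have := (Nat.cast_le (α := ℝ)).mpr hmn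
    linarith
  have hu0 : Filter.Tendsto u Filter.atTop (nhds 0) := by
    have h := tendsto_one_div_add_atTop_nhds_zero_nat.const_mul (b / 2)
    show Filter.Tendsto (fun n : ℕ => b / 2 * (1 / (n + 1))) Filter.atTop (nhds 0)
    simpa using h
  have huv : ∀ n, u n ≤ v n := by
    intro n; have := hu_le n; simp only [hvdef]; linarith
  have hvb : ∀ n, v n < b := by
    intro n; have := hu_pos n; simp only [hvdef]; linarith
  have hv_tend : Filter.Tendsto v Filter.atTop (nhds b) := by
    have : Filter.Tendsto (fun n => b - u n) Filter.atTop (nhds (b - 0)) :=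
      tendsto_const_nhds.sub hu0
    simpa using this
  -- integrability of g
  have hgint : IntegrableOn g (Ioo 0 b) :=
    (Integrable.ofReal hΨint).const_mul _
  -- union of Ioo (u n) (v n)
  have hU : (⋃ n, Ioo (u n) (v n)) = Ioo 0 b := by
    apply Subset.antisymm
    · exact iUnion_subset fun n => Ioo_subset_Ioo (hu_pos n).le (by have := hu_pos n; simp only [hvdef]; linarith)
    · intro x hx
      have hε : 0 < min x (b - x) := lt_min hx.1 (by linarith [hx.2])
      obtain ⟨n, hn⟩ := (hu0.eventually (gt_mem_nhds hε)).exists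
      refine mem_iUnion.mpr ⟨n, ?_, ?_⟩
      · exact lt_of_lt_of_le hn (min_le_left _ _)
      · have := lt_of_lt_of_le hn (min_le_right _ _)
        simp only [hvdef]; linarith
  -- integral over Ioo (u n) (v n) tends to integral over Ioo 0 b
  have hT1 : Filter.Tendsto (fun n => ∫ x in Ioo (u n) (v n), g x)
      Filter.atTop (nhds (∫ x in Ioo 0 b, g x)) := by
    have hmono : Monotone (fun n => Ioo (u n) (v n)) := by
      intro m n hmn
      exact Ioo_subset_Ioo (hu_anti hmn) (by simp only [hvdef]; linarith [hu_anti hmn])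
    have := tendsto_setIntegral_of_monotone (fun n => measurableSet_Ioo) hmono (hU ▸ hgint)
    rwa [hU] at this
  have heq : ∀ n, ∫ x in Ioo (u n) (v n), g x = F (v n) - F (u n) := by
    intro n
    rw [← integral_Ioc_eq_integral_Ioo, ← intervalIntegral.integral_of_le (huv n)]
    exact key (u n) (v n) (hu_pos n) (huv n) (hvb n)
  -- limit of F at endpoints
  have hvlim : Filter.Tendsto (fun n => F (v n)) Filter.atTop (nhds 0) := by
    refine hΨb.comp (tendsto_nhdsWithin_of_tendsto_nhds_of_eventually_within _ hv_tend ?_)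
    exact Filter.Eventually.of_forall fun n => hvb n
  have hF0 : Filter.Tendsto F (nhdsWithin 0 (Ioi 0)) (nhds (M - (starRingEnd ℂ) M)) := by
    have hcomb : Filter.Tendsto (fun x =>
        Wx (fun t i => (starRingEnd ℂ) (Θ t i)) Θ x
        + M * Wx (fun t i => (starRingEnd ℂ) (Θ t i)) Φ x
        + (starRingEnd ℂ) M * Wx (fun t i => (starRingEnd ℂ) (Φ t i)) Θ x
        + ((starRingEnd ℂ) M * M) * Wx (fun t i => (starRingEnd ℂ) (Φ t i)) Φ x)
        (nhdsWithin 0 (Ioi 0))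
        (nhds (0 + M * 1 + (starRingEnd ℂ) M * (-1) + ((starRingEnd ℂ) M * M) * 0)) := by
      exact ((hΘΘ.add (hΘΦ.const_mul M)).add (hΦΘ.const_mul _)).add (hΦΦ.const_mul _)
    have hval : (0 + M * 1 + (starRingEnd ℂ) M * (-1) + ((starRingEnd ℂ) M * M) * 0)
        = M - (starRingEnd ℂ) M := by ring
    rw [hval] at hcomb
    refine Filter.Tendsto.congr' ?_ hcomb
    have hmem : Ioo (0:ℝ) b ∈ nhdsWithin 0 (Ioi 0) :=
      Ioo_mem_nhdsGT_of_mem ⟨le_refl _, hb⟩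
    filter_upwards [hmem] with x hx
    have hp := hΨ x hx
    simp only [hFdef, Wx, hp, Pi.add_apply, Pi.smul_apply, smul_eq_mul, map_add, map_mul]
    ring
  have hulim : Filter.Tendsto (fun n => F (u n)) Filter.atTop (nhds (M - (starRingEnd ℂ) M)) := by
    refine hF0.comp (tendsto_nhdsWithin_of_tendsto_nhds_of_eventually_within _ hu0 ?_)
    exact Filter.Eventually.of_forall fun n => hu_pos n
  -- conclude the complex identity
  have hlim2 : Filter.Tendsto (fun n => ∫ x in Ioo (u n) (v n), g x)
      Filter.atTop (nhds (0 - (M - (starRingEnd ℂ) M))) := by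
    simp only [heq]
    exact hvlim.sub hulim
  have hmain : ∫ x in Ioo 0 b, g x = 0 - (M - (starRingEnd ℂ) M) :=
    tendsto_nhds_unique hT1 hlim2
  have hgsplit : ∫ x in Ioo 0 b, g x
      = ((starRingEnd ℂ) z - z) * ((∫ x in Ioo 0 b, r x : ℝ) : ℂ) := by
    rw [hgdef]
    simp only []
    rw [MeasureTheory.integral_const_mul]
    have : ∫ a in Ioo 0 b, ((r a : ℝ) : ℂ) = ((∫ x in Ioo 0 b, r x : ℝ) : ℂ) :=
      integral_ofReal
    rw [this]
  set J : ℝ := ∫ x in Ioo 0 b, r x with hJdef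
  have hceq : ((starRingEnd ℂ) z - z) * (J : ℂ) = (starRingEnd ℂ) M - M := by
    rw [← hgsplit, hmain]; ring
  have him := congrArg Complex.im hceq
  simp only [Complex.mul_im, Complex.sub_im, Complex.sub_re, Complex.conj_im, Complex.conj_re,
    Complex.ofReal_im, Complex.ofReal_re] at him
  have hfin : M.im = z.im * J := by linarith
  have hJnn : 0 ≤ J := setIntegral_nonneg measurableSet_Ioo
    (fun x _ => add_nonneg (Complex.normSq_nonneg _) (Complex.normSq_nonneg _))
  exact ⟨hfin, fun hzpos => hfin ▸ mul_nonneg hzpos.le hJnn⟩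
end
end
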